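/- Suppose 0 < ε < 1. Then the origin (0,0,0) (the monomorphic exiter equilibrium) is locally asymptotically stable for the reduced replicator system: there exists δ > 0 such that every differentiable curve u : [0, ∞) → ℝ³ satisfying u′(t) = F(u(t)) for all t ≥ 0 and ‖u(0)‖ < δ converges to (0,0,0) as t → ∞. -/

import Mathlib

noncomputable section

open Polynomial

/-- Payoff of altruistic punishers. -/
def PiAP (γ x y z : ℝ) : ℝ := x + y - γ * z

/-- Payoff of non-punishing cooperators. -/
def PiNC (x y : ℝ) : ℝ := x + y

/-- Payoff of defectors. -/
def PiD (b β x y : ℝ) : ℝ := (b - β) * x + b * y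

/-- First component of the reduced replicator vector field. -/
def fRep (b β γ ε x y z : ℝ) : ℝ :=
  x * ((1 - x) * (PiAP γ x y z - ε) - y * (PiNC x y - ε) - z * (PiD b β x y - ε))

/-- Second component of the reduced replicator vector field. -/
def gRep (b β γ ε x y z : ℝ) : ℝ :=
  y * ((1 - y) * (PiNC x y - ε) - x * (PiAP γ x y z - ε) - z * (PiD b β x y - ε))

/-- Third component of the reduced replicator vector field. -/
def hRep (b β γ ε x y z : ℝ) : ℝ :=
  z * ((1 - z) * (PiD b β x y - ε) - y * (PiNC x y - ε) - x * (PiAP γ x y z - ε))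

/-- The reduced replicator vector field `F : ℝ³ → ℝ³`. -/
def Fv (b β γ ε : ℝ) (p : ℝ × ℝ × ℝ) : ℝ × ℝ × ℝ :=
  (fRep b β γ ε p.1 p.2.1 p.2.2,
   gRep b β γ ε p.1 p.2.1 p.2.2,
   hRep b β γ ε p.1 p.2.1 p.2.2)

/-- Partial derivative in the first variable. -/
def pd1 (F : ℝ → ℝ → ℝ → ℝ) (p : ℝ × ℝ × ℝ) : ℝ :=
  deriv (fun x => F x p.2.1 p.2.2) p.1

/-- Partial derivative in the second variable. -/
def pd2 (F : ℝ → ℝ → ℝ → ℝ) (p : ℝ × ℝ × ℝ) : ℝ :=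
  deriv (fun y => F p.1 y p.2.2) p.2.1

/-- Partial derivative in the third variable. -/
def pd3 (F : ℝ → ℝ → ℝ → ℝ) (p : ℝ × ℝ × ℝ) : ℝ :=
  deriv (fun z => F p.1 p.2.1 z) p.2.2

/-- The Jacobian matrix of the reduced replicator vector field at `p`. -/
def Jac (b β γ ε : ℝ) (p : ℝ × ℝ × ℝ) : Matrix (Fin 3) (Fin 3) ℝ :=
  !![pd1 (fRep b β γ ε) p, pd2 (fRep b β γ ε) p, pd3 (fRep b β γ ε) p;
     pd1 (gRep b β γ ε) p, pd2 (gRep b β γ ε) p, pd3 (gRep b β γ ε) p;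
     pd1 (hRep b β γ ε) p, pd2 (hRep b β γ ε) p, pd3 (hRep b β γ ε) p]

/-- Auxiliary: bracket A bound. -/
lemma bracketA_le (b β γ ε r x y z : ℝ) (hb : 1 < b) (hβ : 0 < β) (hγ : 0 < γ)
    (hε0 : 0 < ε) (hε1 : ε < 1) (hr0 : 0 ≤ r)
    (hrK : r * (12 + 5*b + 3*β + 3*γ) ≤ ε/2)
    (hx : |x| ≤ r) (hy : |y| ≤ r) (hz : |z| ≤ r) :
    (1 - x) * (PiAP γ x y z - ε) - y * (PiNC x y - ε) - z * (PiD b β x y - ε) ≤ -(ε/2) := by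
  obtain ⟨hx1, hx2⟩ := abs_le.mp hx
  obtain ⟨hy1, hy2⟩ := abs_le.mp hy
  obtain ⟨hz1, hz2⟩ := abs_le.mp hz
  simp only [PiAP, PiNC, PiD]
  nlinarith [mul_nonneg (sub_nonneg.2 hx2) (sub_nonneg.2 hy2), mul_nonneg (sub_nonneg.2 hx2) (sub_nonneg.2 hz2),
    mul_nonneg (sub_nonneg.2 hy2) (sub_nonneg.2 hz2),
    mul_nonneg (by linarith : (0:ℝ) ≤ x + r) (by linarith : (0:ℝ) ≤ y + r),
    mul_nonneg (by linarith : (0:ℝ) ≤ x + r) (by linarith : (0:ℝ) ≤ z + r),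
    mul_nonneg (by linarith : (0:ℝ) ≤ y + r) (by linarith : (0:ℝ) ≤ z + r),
    mul_nonneg (sub_nonneg.2 hx2) (by linarith : (0:ℝ) ≤ y + r),
    mul_nonneg (sub_nonneg.2 hy2) (by linarith : (0:ℝ) ≤ x + r),
    mul_nonneg (sub_nonneg.2 hx2) (by linarith : (0:ℝ) ≤ z + r),
    mul_nonneg (sub_nonneg.2 hz2) (by linarith : (0:ℝ) ≤ x + r),
    mul_nonneg (sub_nonneg.2 hy2) (by linarith : (0:ℝ) ≤ z + r),
    mul_nonneg (sub_nonneg.2 hz2) (by linarith : (0:ℝ) ≤ y + r),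
    sq_nonneg (x+y), sq_nonneg (x-y), sq_nonneg (y+z), sq_nonneg (x+z),
    mul_pos (by linarith : (0:ℝ) < b - 1) hγ]

lemma bracketB_le (b β γ ε r x y z : ℝ) (hb : 1 < b) (hβ : 0 < β) (hγ : 0 < γ)
    (hε0 : 0 < ε) (hε1 : ε < 1) (hr0 : 0 ≤ r)
    (hrK : r * (12 + 5*b + 3*β + 3*γ) ≤ ε/2)
    (hx : |x| ≤ r) (hy : |y| ≤ r) (hz : |z| ≤ r) :
    (1 - y) * (PiNC x y - ε) - x * (PiAP γ x y z - ε) - z * (PiD b β x y - ε) ≤ -(ε/2) := by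
  obtain ⟨hx1, hx2⟩ := abs_le.mp hx
  obtain ⟨hy1, hy2⟩ := abs_le.mp hy
  obtain ⟨hz1, hz2⟩ := abs_le.mp hz
  simp only [PiAP, PiNC, PiD]
  nlinarith [mul_nonneg (sub_nonneg.2 hx2) (sub_nonneg.2 hy2), mul_nonneg (sub_nonneg.2 hx2) (sub_nonneg.2 hz2),
    mul_nonneg (sub_nonneg.2 hy2) (sub_nonneg.2 hz2),
    mul_nonneg (by linarith : (0:ℝ) ≤ x + r) (by linarith : (0:ℝ) ≤ y + r),
    mul_nonneg (by linarith : (0:ℝ) ≤ x + r) (by linarith : (0:ℝ) ≤ z + r),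
    mul_nonneg (by linarith : (0:ℝ) ≤ y + r) (by linarith : (0:ℝ) ≤ z + r),
    mul_nonneg (sub_nonneg.2 hx2) (by linarith : (0:ℝ) ≤ y + r),
    mul_nonneg (sub_nonneg.2 hy2) (by linarith : (0:ℝ) ≤ x + r),
    mul_nonneg (sub_nonneg.2 hx2) (by linarith : (0:ℝ) ≤ z + r),
    mul_nonneg (sub_nonneg.2 hz2) (by linarith : (0:ℝ) ≤ x + r),
    mul_nonneg (sub_nonneg.2 hy2) (by linarith : (0:ℝ) ≤ z + r),
    mul_nonneg (sub_nonneg.2 hz2) (by linarith : (0:ℝ) ≤ y + r),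
    sq_nonneg (x+y), sq_nonneg (x-y), sq_nonneg (y+z), sq_nonneg (x+z),
    mul_pos (by linarith : (0:ℝ) < b - 1) hγ]

lemma bracketC_le (b β γ ε r x y z : ℝ) (hb : 1 < b) (hβ : 0 < β) (hγ : 0 < γ)
    (hε0 : 0 < ε) (hε1 : ε < 1) (hr0 : 0 ≤ r)
    (hrK : r * (12 + 5*b + 3*β + 3*γ) ≤ ε/2)
    (hx : |x| ≤ r) (hy : |y| ≤ r) (hz : |z| ≤ r) :
    (1 - z) * (PiD b β x y - ε) - y * (PiNC x y - ε) - x * (PiAP γ x y z - ε) ≤ -(ε/2) := by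
  obtain ⟨hx1, hx2⟩ := abs_le.mp hx
  obtain ⟨hy1, hy2⟩ := abs_le.mp hy
  obtain ⟨hz1, hz2⟩ := abs_le.mp hz
  simp only [PiAP, PiNC, PiD]
  nlinarith [mul_nonneg (sub_nonneg.2 hx2) (sub_nonneg.2 hy2), mul_nonneg (sub_nonneg.2 hx2) (sub_nonneg.2 hz2),
    mul_nonneg (sub_nonneg.2 hy2) (sub_nonneg.2 hz2),
    mul_nonneg (by linarith : (0:ℝ) ≤ x + r) (by linarith : (0:ℝ) ≤ y + r),
    mul_nonneg (by linarith : (0:ℝ) ≤ x + r) (by linarith : (0:ℝ) ≤ z + r),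
    mul_nonneg (by linarith : (0:ℝ) ≤ y + r) (by linarith : (0:ℝ) ≤ z + r),
    mul_nonneg (sub_nonneg.2 hx2) (by linarith : (0:ℝ) ≤ y + r),
    mul_nonneg (sub_nonneg.2 hy2) (by linarith : (0:ℝ) ≤ x + r),
    mul_nonneg (sub_nonneg.2 hx2) (by linarith : (0:ℝ) ≤ z + r),
    mul_nonneg (sub_nonneg.2 hz2) (by linarith : (0:ℝ) ≤ x + r),
    mul_nonneg (sub_nonneg.2 hy2) (by linarith : (0:ℝ) ≤ z + r),
    mul_nonneg (sub_nonneg.2 hz2) (by linarith : (0:ℝ) ≤ y + r),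
    sq_nonneg (x+y), sq_nonneg (x-y), sq_nonneg (y+z), sq_nonneg (x+z),
    mul_pos (by linarith : (0:ℝ) < b - 1) hγ]

/-- Key Lyapunov inequality: ⟨p, F(p)⟩ ≤ -(ε/2)‖p‖² (times 2). -/
lemma keyQ (b β γ ε r x y z : ℝ) (hb : 1 < b) (hβ : 0 < β) (hγ : 0 < γ)
    (hε0 : 0 < ε) (hε1 : ε < 1) (hr0 : 0 ≤ r)
    (hrK : r * (12 + 5*b + 3*β + 3*γ) ≤ ε/2)
    (hx : |x| ≤ r) (hy : |y| ≤ r) (hz : |z| ≤ r) :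
    2*x*fRep b β γ ε x y z + 2*y*gRep b β γ ε x y z + 2*z*hRep b β γ ε x y z
      ≤ -ε * (x^2 + y^2 + z^2) := by
  have hA := bracketA_le b β γ ε r x y z hb hβ hγ hε0 hε1 hr0 hrK hx hy hz
  have hB := bracketB_le b β γ ε r x y z hb hβ hγ hε0 hε1 hr0 hrK hx hy hz
  have hC := bracketC_le b β γ ε r x y z hb hβ hγ hε0 hε1 hr0 hrK hx hy hz
  have h1 := mul_le_mul_of_nonneg_left hA (sq_nonneg x)
  have h2 := mul_le_mul_of_nonneg_left hB (sq_nonneg y)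
  have h3 := mul_le_mul_of_nonneg_left hC (sq_nonneg z)
  simp only [fRep, gRep, hRep]
  nlinarith [h1, h2, h3]


set_option maxHeartbeats 2000000 in
/-- for `0 < ε < 1` the origin (the monomorphic exiter equilibrium)
is locally asymptotically stable for the reduced replicator system. -/
theorem exit_equilibrium_locally_asymptotically_stable (b β γ ε : ℝ)
    (hb : 1 < b) (hβ : 0 < β) (hγ : 0 < γ) (hε0 : 0 < ε) (hε1 : ε < 1) :
    ∃ δ > 0, ∀ u : ℝ → ℝ × ℝ × ℝ,
      (∀ t : ℝ, 0 ≤ t → HasDerivAt u (Fv b β γ ε (u t)) t) →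
      ‖u 0‖ < δ →
      Filter.Tendsto u Filter.atTop (nhds ((0 : ℝ), (0 : ℝ), (0 : ℝ))) := by
  have hKpos : (0:ℝ) < 12 + 5*b + 3*β + 3*γ := by nlinarith
  obtain ⟨r, hr0, hrK⟩ : ∃ r : ℝ, 0 < r ∧ r * (12 + 5*b + 3*β + 3*γ) ≤ ε / 2 := by
    refine ⟨ε / (2 * (12 + 5*b + 3*β + 3*γ)), by positivity, ?_⟩
    rw [div_mul_eq_mul_div, mul_comm]
    rw [div_le_div_iff₀ (by positivity) (by norm_num)]
    nlinarith
  refine ⟨r/2, by positivity, fun u hu hu0 => ?_⟩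
  -- coordinates and Lyapunov function
  set V : ℝ → ℝ := fun t => (u t).1^2 + (u t).2.1^2 + (u t).2.2^2 with hVdef
  have hVnonneg : ∀ t, 0 ≤ V t := fun t => by positivity
  -- derivative of V
  set D : ℝ → ℝ := fun t =>
      2*(u t).1*fRep b β γ ε (u t).1 (u t).2.1 (u t).2.2
    + 2*(u t).2.1*gRep b β γ ε (u t).1 (u t).2.1 (u t).2.2
    + 2*(u t).2.2*hRep b β γ ε (u t).1 (u t).2.1 (u t).2.2 with hDdef
  have hVderiv : ∀ t, 0 ≤ t → HasDerivAt V (D t) t := by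
    intro t ht
    have h1 : HasDerivAt (fun s => (u s).1) (fRep b β γ ε (u t).1 (u t).2.1 (u t).2.2) t :=
      (hu t ht).fst
    have h2 : HasDerivAt (fun s => (u s).2.1) (gRep b β γ ε (u t).1 (u t).2.1 (u t).2.2) t :=
      (hu t ht).snd.fst
    have h3 : HasDerivAt (fun s => (u s).2.2) (hRep b β γ ε (u t).1 (u t).2.1 (u t).2.2) t :=
      (hu t ht).snd.snd
    have hd : HasDerivAt (fun s => (u s).1^2 + (u s).2.1^2 + (u s).2.2^2) _ t :=
      (((h1.pow 2).add (h2.pow 2)).add (h3.pow 2))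
    convert hd using 1
    simp only [hDdef]
    push_cast
    ring
  have hVcont : ∀ t, 0 ≤ t → ContinuousAt V t := fun t ht => (hVderiv t ht).continuousAt
  -- if V t < r^2 then D t ≤ -ε V t
  have habs : ∀ t, V t ≤ r^2 → |(u t).1| ≤ r ∧ |(u t).2.1| ≤ r ∧ |(u t).2.2| ≤ r := by
    intro t h
    have h' : (u t).1 ^ 2 + (u t).2.1 ^ 2 + (u t).2.2 ^ 2 ≤ r ^ 2 := h
    refine ⟨?_, ?_, ?_⟩ <;>
      nlinarith [abs_nonneg (u t).1, sq_abs (u t).1, abs_nonneg (u t).2.1, sq_abs (u t).2.1,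
        abs_nonneg (u t).2.2, sq_abs (u t).2.2, hVnonneg t, sq_nonneg (u t).1,
        sq_nonneg (u t).2.1, sq_nonneg (u t).2.2, hr0.le]
  have hDle : ∀ t, V t ≤ r^2 → D t ≤ -ε * V t := by
    intro t h
    obtain ⟨hx, hy, hz⟩ := habs t h
    exact keyQ b β γ ε r _ _ _ hb hβ hγ hε0 hε1 hr0.le hrK hx hy hz
  -- initial condition
  have hV0 : V 0 < r^2 := by
    have h1 : |(u 0).1| ≤ ‖u 0‖ := by
      simpa [Real.norm_eq_abs] using norm_fst_le (u 0)
    have h2 : |(u 0).2.1| ≤ ‖u 0‖ := by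
      simpa [Real.norm_eq_abs] using le_trans (norm_fst_le (u 0).2) (norm_snd_le (u 0))
    have h3 : |(u 0).2.2| ≤ ‖u 0‖ := by
      simpa [Real.norm_eq_abs] using le_trans (norm_snd_le (u 0).2) (norm_snd_le (u 0))
    have hn : 0 ≤ ‖u 0‖ := norm_nonneg _
    show (u 0).1 ^ 2 + (u 0).2.1 ^ 2 + (u 0).2.2 ^ 2 < r ^ 2
    have hsq : ‖u 0‖^2 < (r/2)^2 := by nlinarith
    have e1 : (u 0).1^2 ≤ ‖u 0‖^2 := by nlinarith [sq_abs (u 0).1, abs_nonneg (u 0).1]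
    have e2 : (u 0).2.1^2 ≤ ‖u 0‖^2 := by nlinarith [sq_abs (u 0).2.1, abs_nonneg (u 0).2.1]
    have e3 : (u 0).2.2^2 ≤ ‖u 0‖^2 := by nlinarith [sq_abs (u 0).2.2, abs_nonneg (u 0).2.2]
    nlinarith [hr0]
  -- invariance: V t < r^2 for all t ≥ 0
  have hinv : ∀ t, 0 ≤ t → V t < r^2 := by
    by_contra hcon
    push_neg at hcon
    obtain ⟨t₁, ht₁0, ht₁⟩ := hcon
    set S : Set ℝ := {t | 0 ≤ t ∧ r^2 ≤ V t} with hSdef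
    have hSne : S.Nonempty := ⟨t₁, ht₁0, ht₁⟩
    have hSbdd : BddBelow S := ⟨0, fun s hs => hs.1⟩
    have hSclosed : IsClosed S := by
      rw [← closure_subset_iff_isClosed]
      intro t ht
      have hsub : S ⊆ Set.Ici (0:ℝ) := fun s hs => hs.1
      have ht0 : 0 ≤ t := by
        have h := closure_mono hsub ht
        rwa [isClosed_Ici.closure_eq] at h
      refine ⟨ht0, ?_⟩
      have hne := mem_closure_iff_nhdsWithin_neBot.mp ht
      exact ge_of_tendsto ((hVcont t ht0).continuousWithinAt)
        (eventually_mem_nhdsWithin.mono fun s (hs : s ∈ S) => hs.2)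
    set t₀ : ℝ := sInf S with ht₀def
    have ht₀mem : t₀ ∈ S := hSclosed.csInf_mem hSne hSbdd
    have ht₀0 : 0 ≤ t₀ := ht₀mem.1
    have hlt : ∀ s, 0 ≤ s → s < t₀ → V s < r^2 := by
      intro s h1 h2
      by_contra h
      exact absurd (csInf_le hSbdd ⟨h1, le_of_not_gt h⟩) (not_le.2 h2)
    have ht₀pos : 0 < t₀ := by
      rcases lt_or_eq_of_le ht₀0 with h | h
      · exact h
      · exact absurd ht₀mem.2 (not_le.2 (h ▸ hV0))
    have hmono : AntitoneOn V (Set.Icc 0 t₀) := by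
      apply antitoneOn_of_deriv_nonpos (convex_Icc _ _)
      · exact fun s hs => (hVcont s hs.1).continuousWithinAt
      · intro s hs
        rw [interior_Icc] at hs
        exact (hVderiv s hs.1.le).differentiableAt.differentiableWithinAt
      · intro s hs
        rw [interior_Icc] at hs
        rw [(hVderiv s hs.1.le).deriv]
        have hVs := hlt s hs.1.le hs.2
        have := hDle s hVs.le
        nlinarith [hVnonneg s, hε0]
    have := hmono (Set.left_mem_Icc.2 ht₀0) (Set.right_mem_Icc.2 ht₀0) ht₀0
    exact absurd ht₀mem.2 (not_le.2 (lt_of_le_of_lt this hV0))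
  -- exponential decay: E t = V t * exp(ε t) is antitone on [0,∞)
  set E : ℝ → ℝ := fun t => V t * Real.exp (ε * t) with hEdef
  have hexp : ∀ t : ℝ, HasDerivAt (fun s => Real.exp (ε * s)) (Real.exp (ε * t) * ε) t := by
    intro t
    have h : HasDerivAt (fun s : ℝ => ε * s) ε t := by
      simpa using (hasDerivAt_id t).const_mul ε
    exact h.exp
  have hEderiv : ∀ t, 0 ≤ t →
      HasDerivAt E (D t * Real.exp (ε * t) + V t * (Real.exp (ε * t) * ε)) t :=
    fun t ht => (hVderiv t ht).mul (hexp t)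
  have hEmono : AntitoneOn E (Set.Ici 0) := by
    apply antitoneOn_of_deriv_nonpos (convex_Ici _)
    · exact fun s hs => ((hVcont s hs).mul ((Real.continuous_exp.comp
        (continuous_const.mul continuous_id)).continuousAt)).continuousWithinAt
    · intro s hs
      rw [interior_Ici] at hs
      exact (hEderiv s hs.le).differentiableAt.differentiableWithinAt
    · intro s hs
      rw [interior_Ici] at hs
      rw [(hEderiv s hs.le).deriv]
      have hD := hDle s (hinv s hs.le).le
      have he : 0 < Real.exp (ε * s) := Real.exp_pos _
      nlinarith [hVnonneg s]
  have hVle : ∀ t, 0 ≤ t → V t ≤ V 0 * Real.exp (-(ε * t)) := by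
    intro t ht
    have h := hEmono (Set.mem_Ici.2 (le_refl 0)) (Set.mem_Ici.2 ht) ht
    simp only [hEdef, mul_zero, Real.exp_zero, mul_one] at h
    rw [Real.exp_neg, ← div_eq_mul_inv, le_div_iff₀ (Real.exp_pos _)]
    exact h
  -- V tends to 0
  have hexp_tend : Filter.Tendsto (fun t => V 0 * Real.exp (-(ε * t)))
      Filter.atTop (nhds 0) := by
    have h1 : Filter.Tendsto (fun t : ℝ => ε * t) Filter.atTop Filter.atTop :=
      Filter.Tendsto.const_mul_atTop hε0 Filter.tendsto_id
    have h2 : Filter.Tendsto (fun t : ℝ => -(ε * t)) Filter.atTop Filter.atBot :=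
      Filter.tendsto_neg_atBot_iff.mpr h1
    have h3 := Real.tendsto_exp_atBot.comp h2
    simpa using h3.const_mul (V 0)
  have hVtend : Filter.Tendsto V Filter.atTop (nhds 0) := by
    apply squeeze_zero' (Filter.Eventually.of_forall hVnonneg)
      ((Filter.eventually_ge_atTop 0).mono fun t ht => hVle t ht) hexp_tend
  have hsqrt : Filter.Tendsto (fun t => Real.sqrt (V t)) Filter.atTop (nhds 0) := by
    have := (Real.continuous_sqrt.tendsto 0).comp hVtend
    simpa [Function.comp_def] using this
  -- each coordinate tends to 0
  have hcoord : ∀ (c : ℝ → ℝ), (∀ t, c t ^ 2 ≤ V t) →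
      Filter.Tendsto c Filter.atTop (nhds 0) := by
    intro c hc
    rw [tendsto_zero_iff_abs_tendsto_zero]
    apply squeeze_zero' (Filter.Eventually.of_forall fun t => abs_nonneg _)
      (Filter.Eventually.of_forall fun t => ?_) hsqrt
    calc |c t| = Real.sqrt ((c t)^2) := (Real.sqrt_sq_eq_abs _).symm
      _ ≤ Real.sqrt (V t) := Real.sqrt_le_sqrt (hc t)
  have hX := hcoord (fun t => (u t).1) (fun t => by
    show (u t).1 ^ 2 ≤ (u t).1 ^ 2 + (u t).2.1 ^ 2 + (u t).2.2 ^ 2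
    nlinarith [sq_nonneg (u t).2.1, sq_nonneg (u t).2.2])
  have hY := hcoord (fun t => (u t).2.1) (fun t => by
    show (u t).2.1 ^ 2 ≤ (u t).1 ^ 2 + (u t).2.1 ^ 2 + (u t).2.2 ^ 2
    nlinarith [sq_nonneg (u t).1, sq_nonneg (u t).2.2])
  have hZ := hcoord (fun t => (u t).2.2) (fun t => by
    show (u t).2.2 ^ 2 ≤ (u t).1 ^ 2 + (u t).2.1 ^ 2 + (u t).2.2 ^ 2
    nlinarith [sq_nonneg (u t).1, sq_nonneg (u t).2.1])
  have : Filter.Tendsto (fun t => ((u t).1, ((u t).2.1, (u t).2.2)))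
      Filter.atTop (nhds ((0:ℝ), (0:ℝ), (0:ℝ))) :=
    hX.prodMk_nhds (hY.prodMk_nhds hZ)
  exact this
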